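/- Let m : Finset(Fin n) → ℝ_{>0} and 1 ≤ P ≤ n. Then Σ_{p=1}^P (1/C(n,p)) Σ_{|T|=p} (1/p) Σ_{j∈T} [log m(T^c ∪ {j}) − log m(T^c)] = (1/C(n,P)) Σ_{|T|=P} [log m(univ) − log m(T^c)]. -/

import Mathlib

open Finset

/-- Average of `log m(univ) − log m(Tᶜ)` over `p`-element subsets. -/
noncomputable def avgA (n : ℕ) (m : Finset (Fin n) → ℝ) (p : ℕ) : ℝ :=
  ((n.choose p : ℝ))⁻¹ * ∑ T ∈ (Finset.univ : Finset (Fin n)).powersetCard p,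
    (Real.log (m (Finset.univ : Finset (Fin n))) - Real.log (m Tᶜ))

lemma avgA_zero (n : ℕ) (m : Finset (Fin n) → ℝ) : avgA n m 0 = 0 := by
  simp [avgA]

lemma double_sum_erase (n q : ℕ) (g : Finset (Fin n) → ℝ) :
    ∑ T ∈ (Finset.univ : Finset (Fin n)).powersetCard (q+1), ∑ j ∈ T, g (T.erase j)
    = ((n - q : ℕ) : ℝ) * ∑ S ∈ (Finset.univ : Finset (Fin n)).powersetCard q, g S := by
  have h1 : ∑ T ∈ (Finset.univ : Finset (Fin n)).powersetCard (q+1), ∑ j ∈ T, g (T.erase j)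
      = ∑ x ∈ ((Finset.univ : Finset (Fin n)).powersetCard (q+1)).sigma (fun T => T),
          g (x.1.erase x.2) := by
    rw [Finset.sum_sigma]
  have h2 : ∑ S ∈ (Finset.univ : Finset (Fin n)).powersetCard q, ∑ _j ∈ Sᶜ, g S
      = ∑ x ∈ ((Finset.univ : Finset (Fin n)).powersetCard q).sigma (fun S => Sᶜ),
          g x.1 := by
    rw [Finset.sum_sigma]
  have key : ∑ x ∈ ((Finset.univ : Finset (Fin n)).powersetCard (q+1)).sigma (fun T => T),
          g (x.1.erase x.2)
      = ∑ x ∈ ((Finset.univ : Finset (Fin n)).powersetCard q).sigma (fun S => Sᶜ),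
          g x.1 := by
    refine Finset.sum_nbij' (fun x => ⟨x.1.erase x.2, x.2⟩) (fun y => ⟨insert y.2 y.1, y.2⟩)
      ?_ ?_ ?_ ?_ ?_
    · rintro ⟨T, j⟩ hx
      simp only [Finset.mem_sigma, Finset.mem_powersetCard_univ] at hx ⊢
      refine ⟨?_, ?_⟩
      · rw [Finset.card_erase_of_mem hx.2, hx.1]; rfl
      · simp
    · rintro ⟨S, j⟩ hy
      simp only [Finset.mem_sigma, Finset.mem_powersetCard_univ, Finset.mem_compl] at hy ⊢
      exact ⟨by rw [Finset.card_insert_of_notMem hy.2, hy.1], Finset.mem_insert_self _ _⟩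
    · rintro ⟨T, j⟩ hx
      simp only [Finset.mem_sigma, Finset.mem_powersetCard_univ] at hx
      simp [Finset.insert_erase hx.2]
    · rintro ⟨S, j⟩ hy
      simp only [Finset.mem_sigma, Finset.mem_powersetCard_univ, Finset.mem_compl] at hy
      simp [Finset.erase_insert hy.2]
    · rintro ⟨T, j⟩ _; rfl
  rw [h1, key, ← h2]
  rw [Finset.mul_sum]
  refine Finset.sum_congr rfl fun S hS => ?_
  rw [Finset.mem_powersetCard_univ] at hS
  rw [Finset.sum_const, Finset.card_compl, hS, Fintype.card_fin, nsmul_eq_mul]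

lemma term_step (n : ℕ) (m : Finset (Fin n) → ℝ) (q : ℕ) (hq : q + 1 ≤ n) :
    ((n.choose (q+1) : ℝ))⁻¹ *
      ∑ T ∈ (Finset.univ : Finset (Fin n)).powersetCard (q+1), ((q+1 : ℕ) : ℝ)⁻¹ *
        ∑ j ∈ T, (Real.log (m (Tᶜ ∪ {j})) - Real.log (m Tᶜ)) =
    avgA n m (q+1) - avgA n m q := by
  set f : Finset (Fin n) → ℝ := fun S =>
    Real.log (m (Finset.univ : Finset (Fin n))) - Real.log (m Sᶜ) with hf
  have inner : ∀ T ∈ (Finset.univ : Finset (Fin n)).powersetCard (q+1),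
      ∑ j ∈ T, (Real.log (m (Tᶜ ∪ {j})) - Real.log (m Tᶜ))
      = ((q+1 : ℕ) : ℝ) * f T - ∑ j ∈ T, f (T.erase j) := by
    intro T hT
    rw [Finset.mem_powersetCard_univ] at hT
    have : ∀ j ∈ T, Real.log (m (Tᶜ ∪ {j})) - Real.log (m Tᶜ) = f T - f (T.erase j) := by
      intro j hj
      have hcompl : (T.erase j)ᶜ = Tᶜ ∪ {j} := by
        rw [Finset.compl_erase, Finset.insert_eq, Finset.union_comm]
      simp only [hf, hcompl]
      ring
    rw [Finset.sum_congr rfl this, Finset.sum_sub_distrib, Finset.sum_const, hT,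
      nsmul_eq_mul]
  have hq1 : ((q+1 : ℕ) : ℝ) ≠ 0 := by positivity
  have hch1 : ((n.choose (q+1) : ℕ) : ℝ) ≠ 0 := by
    exact_mod_cast (Nat.choose_pos hq).ne'
  have hch0 : ((n.choose q : ℕ) : ℝ) ≠ 0 := by
    exact_mod_cast (Nat.choose_pos (le_trans (Nat.le_succ q) hq)).ne'
  calc ((n.choose (q+1) : ℝ))⁻¹ *
      ∑ T ∈ (Finset.univ : Finset (Fin n)).powersetCard (q+1), ((q+1 : ℕ) : ℝ)⁻¹ *
        ∑ j ∈ T, (Real.log (m (Tᶜ ∪ {j})) - Real.log (m Tᶜ))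
      = ((n.choose (q+1) : ℝ))⁻¹ *
        ∑ T ∈ (Finset.univ : Finset (Fin n)).powersetCard (q+1),
          (f T - ((q+1 : ℕ) : ℝ)⁻¹ * ∑ j ∈ T, f (T.erase j)) := by
        congr 1
        refine Finset.sum_congr rfl fun T hT => ?_
        rw [inner T hT, mul_sub, inv_mul_cancel_left₀ hq1]
    _ = ((n.choose (q+1) : ℝ))⁻¹ *
          ∑ T ∈ (Finset.univ : Finset (Fin n)).powersetCard (q+1), f T
        - ((n.choose (q+1) : ℝ))⁻¹ * (((q+1 : ℕ) : ℝ)⁻¹ *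
          ∑ T ∈ (Finset.univ : Finset (Fin n)).powersetCard (q+1), ∑ j ∈ T, f (T.erase j)) := by
        rw [Finset.sum_sub_distrib, mul_sub, ← Finset.mul_sum]
    _ = avgA n m (q+1) - avgA n m q := by
        rw [double_sum_erase]
        unfold avgA
        congr 1
        rw [← mul_assoc, ← mul_assoc]
        congr 1
        have hcast : ((n.choose (q+1) : ℕ) : ℝ) * ((q+1 : ℕ) : ℝ)
            = ((n.choose q : ℕ) : ℝ) * ((n - q : ℕ) : ℝ) := by
          exact_mod_cast congrArg (Nat.cast (R := ℝ)) (Nat.choose_succ_right_eq n q)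
        have hnq : ((n - q : ℕ) : ℝ) ≠ 0 := by
          have : 0 < n - q := Nat.sub_pos_of_lt hq
          positivity
        field_simp
        push_cast at hcast ⊢
        linarith

/-- Subset-indexed form of the `S_CCV` corollary: the cumulative cross-validation score
through leave-`P`-out equals the average over `P`-element test sets `T` of the log
conditional probability `log m(univ) − log m(T^c)` of the test set given the training
set. -/
theorem stmt12 (n : ℕ) (m : Finset (Fin n) → ℝ) (hpos : ∀ S, 0 < m S)
    (P : ℕ) (hP1 : 1 ≤ P) (hP2 : P ≤ n) :
    ∑ p ∈ Finset.Icc 1 P, ((n.choose p : ℝ))⁻¹ *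
      ∑ T ∈ (Finset.univ : Finset (Fin n)).powersetCard p, (p : ℝ)⁻¹ *
        ∑ j ∈ T, (Real.log (m (Tᶜ ∪ {j})) - Real.log (m Tᶜ)) =
    ((n.choose P : ℝ))⁻¹ *
      ∑ T ∈ (Finset.univ : Finset (Fin n)).powersetCard P,
        (Real.log (m (Finset.univ : Finset (Fin n))) - Real.log (m Tᶜ)) := by
  have hstep : ∀ p ∈ Finset.Icc 1 P,
      ((n.choose p : ℝ))⁻¹ *
        ∑ T ∈ (Finset.univ : Finset (Fin n)).powersetCard p, (p : ℝ)⁻¹ *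
          ∑ j ∈ T, (Real.log (m (Tᶜ ∪ {j})) - Real.log (m Tᶜ))
      = avgA n m p - avgA n m (p-1) := by
    intro p hp
    rw [Finset.mem_Icc] at hp
    obtain ⟨q, rfl⟩ := Nat.exists_eq_add_of_le' hp.1
    have := term_step n m q (le_trans hp.2 hP2)
    simpa using this
  rw [Finset.sum_congr rfl hstep]
  have : ∑ p ∈ Finset.Icc 1 P, (avgA n m p - avgA n m (p-1)) = avgA n m P - avgA n m 0 := by
    have hmap : Finset.Icc 1 P = Finset.map ⟨fun i => i + 1, fun a b h => by simpa using h⟩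
        (Finset.range P) := by
      ext x
      simp only [Finset.mem_Icc, Finset.mem_map, Finset.mem_range,
        Function.Embedding.coeFn_mk]
      constructor
      · intro h; exact ⟨x - 1, by omega, by show x - 1 + 1 = x; omega⟩
      · rintro ⟨a, ha, rfl⟩; show 1 ≤ a + 1 ∧ a + 1 ≤ P; omega
    rw [hmap, Finset.sum_map]
    show ∑ x ∈ Finset.range P, (avgA n m (x + 1) - avgA n m (x + 1 - 1)) = _
    simpa using Finset.sum_range_sub (avgA n m) P
  rw [this, avgA_zero, sub_zero, avgA]
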